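/- Every continuous function f : ℝ → ℝ satisfying f(x+1) − f(x) = Π₀(x) for all x, where Π₀ is continuous, 1-periodic and Π₀(0)=0, is of the form f(x) = P(x) + ⌊x⌋·Π₀(x) for some continuous 1-periodic function P. -/

import Mathlib

theorem stmt2 (Pi0 f : ℝ → ℝ) (hPic : Continuous Pi0)
    (hper : ∀ x : ℝ, Pi0 (x + 1) = Pi0 x) (h0 : Pi0 0 = 0)
    (hfc : Continuous f) (hf : ∀ x : ℝ, f (x + 1) - f x = Pi0 x) :
    ∃ P : ℝ → ℝ, Continuous P ∧ (∀ x : ℝ, P (x + 1) = P x) ∧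
      ∀ x : ℝ, f x = P x + (⌊x⌋ : ℝ) * Pi0 x := by
  have hPin : ∀ (n : ℤ) (x : ℝ), Pi0 (x + n) = Pi0 x := by
    intro n
    induction n using Int.induction_on with
    | zero => simp
    | succ k ih =>
        intro x
        have : x + ((k : ℤ) + 1 : ℤ) = (x + (k : ℤ)) + 1 := by push_cast; ring
        rw [this, hper, ih x]
    | pred k ih =>
        intro x
        have : x + (-(k : ℤ) - 1 : ℤ) + 1 = x + (-(k : ℤ) : ℤ) := by push_cast; ring
        calc Pi0 (x + (-(k : ℤ) - 1 : ℤ)) = Pi0 (x + (-(k : ℤ) - 1 : ℤ) + 1) := (hper _).symm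
          _ = Pi0 (x + (-(k : ℤ) : ℤ)) := by rw [this]
          _ = Pi0 x := ih x
  have key : ∀ (n : ℤ) (x : ℝ), f (x + n) = f x + n * Pi0 x := by
    intro n
    induction n using Int.induction_on with
    | zero => simp
    | succ k ih =>
        intro x
        have e : x + ((k : ℤ) + 1 : ℤ) = (x + (k : ℤ)) + 1 := by push_cast; ring
        have h1 := hf (x + (k : ℤ))
        have h2 := hPin k x
        rw [e]
        push_cast at h1 h2 ih ⊢
        linarith [ih x]
    | pred k ih =>
        intro x
        set y : ℝ := x + (-(k : ℤ) - 1 : ℤ) with hy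
        have e : y + 1 = x + (-(k : ℤ) : ℤ) := by rw [hy]; push_cast; ring
        have h1 := hf y
        rw [e] at h1
        have h2 := hPin (-(k : ℤ) - 1) x
        rw [← hy] at h2
        show f y = f x + ((-(k : ℤ) - 1 : ℤ) : ℝ) * Pi0 x
        push_cast at h2 h1 ih ⊢
        linarith [ih x]
  refine ⟨fun x => f (Int.fract x), ?_, ?_, ?_⟩
  · have hf01 : f 0 = f 1 := by
      have h := hf 0
      rw [h0, zero_add] at h
      linarith
    exact ContinuousOn.comp_fract'' hfc.continuousOn hf01
  · intro x; simp only []; rw [Int.fract_add_one]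
  · intro x
    have hx : f x = f (Int.fract x + (⌊x⌋ : ℤ)) := by
      rw [Int.fract]; push_cast; ring_nf
    have hp : Pi0 (Int.fract x) = Pi0 x := by
      have h := hPin ⌊x⌋ (Int.fract x)
      rw [Int.fract, sub_add_cancel] at h
      rw [Int.fract]
      exact h.symm
    simp only []
    rw [hx, key ⌊x⌋ (Int.fract x), hp]
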